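/- Let α = (α_i)_{i≥0} and β = (β_i)_{i≥0} be two sequences of complex numbers with α_0 = β_0. Then for every positive integer n, det(P_{α,β}(n)) = det(T_{α̂,β̂}(n)), where α̂, β̂ are the binomial inverse transforms of α, β. -/

import Mathlib

open Matrix

/-- Entry `P_{i,j}` of the generalized Pascal triangle associated to sequences `α`, `β`:
`P_{i,0} = α i`, `P_{0,j} = β j`, and `P_{i,j} = P_{i-1,j} + P_{i,j-1}` for `i, j ≥ 1`. -/
def pascalEntry {R : Type*} [CommRing R] (α β : ℕ → R) : ℕ → ℕ → R
  | i, 0 => α i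
  | 0, j + 1 => β (j + 1)
  | i + 1, j + 1 => pascalEntry α β i (j + 1) + pascalEntry α β (i + 1) j

/-- The generalized Pascal triangle `P_{α,β}(n)`. -/
def genPascal {R : Type*} [CommRing R] (α β : ℕ → R) (n : ℕ) :
    Matrix (Fin n) (Fin n) R :=
  Matrix.of fun i j => pascalEntry α β (i : ℕ) (j : ℕ)

/-- The Töplitz matrix `T_{α,β}(n)`: `t_{i,j} = α_{i-j}` if `i ≥ j`, else `β_{j-i}`. -/
def toeplitz {R : Type*} [CommRing R] (α β : ℕ → R) (n : ℕ) :
    Matrix (Fin n) (Fin n) R :=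
  Matrix.of fun i j => if (j : ℕ) ≤ (i : ℕ) then α ((i : ℕ) - (j : ℕ)) else β ((j : ℕ) - (i : ℕ))

/-- The unipotent lower triangular matrix `L(n)` with `L_{i,j} = C(i,j)` for `i ≥ j`. -/
def lowerL (R : Type*) [CommRing R] (n : ℕ) : Matrix (Fin n) (Fin n) R :=
  Matrix.of fun i j => if (j : ℕ) ≤ (i : ℕ) then ((i : ℕ).choose (j : ℕ) : R) else 0

/-- The binomial inverse transform `α̂_i = ∑_{k=0}^{i} (-1)^{i+k} C(i,k) α_k`. -/
def hatSeq {R : Type*} [CommRing R] (α : ℕ → R) (i : ℕ) : R :=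
  ∑ k ∈ Finset.range (i + 1), (-1 : R) ^ (i + k) * (i.choose k : R) * α k

/-- The binomial transform `α̌_i = ∑_{k=0}^{i} C(i,k) α_k`. -/
def checkSeq {R : Type*} [CommRing R] (α : ℕ → R) (i : ℕ) : R :=
  ∑ k ∈ Finset.range (i + 1), (i.choose k : R) * α k

namespace BacherAux

open Finset

lemma step (x : ℕ → ℂ) (i : ℕ) :
    ∑ k ∈ range (i+2), ((i+1).choose k : ℂ) * x k
      = ∑ k ∈ range (i+1), (i.choose k : ℂ) * x k
        + ∑ k ∈ range (i+1), (i.choose k : ℂ) * x (k+1) := by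
  have h0 : ∑ k ∈ range (i+2), (i.choose k : ℂ) * x k
      = ∑ k ∈ range (i+1), (i.choose k : ℂ) * x k := by
    rw [Finset.sum_range_succ]; simp [Nat.choose_succ_self]
  calc ∑ k ∈ range (i+2), ((i+1).choose k : ℂ) * x k
      = ∑ k ∈ range (i+1), ((i+1).choose (k+1) : ℂ) * x (k+1) + ((i+1).choose 0 : ℂ) * x 0 :=
        Finset.sum_range_succ' _ _
    _ = (∑ k ∈ range (i+1), (i.choose (k+1) : ℂ) * x (k+1) + (i.choose 0 : ℂ) * x 0)
        + ∑ k ∈ range (i+1), (i.choose k : ℂ) * x (k+1) := by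
        simp only [Nat.choose_succ_succ]
        push_cast
        simp only [add_mul]
        rw [Finset.sum_add_distrib]
        simp only [Nat.succ_eq_add_one, Nat.choose_zero_right, Nat.cast_one]
        ring
    _ = ∑ k ∈ range (i+2), (i.choose k : ℂ) * x k + ∑ k ∈ range (i+1), (i.choose k : ℂ) * x (k+1) := by
        rw [Finset.sum_range_succ' (fun k => (i.choose k : ℂ) * x k)]
    _ = _ := by rw [h0]

lemma inv_lemma (α : ℕ → ℂ) (i : ℕ) :
    ∑ k ∈ range (i+1), (i.choose k : ℂ) * hatSeq α k = α i := by
  have expand : ∀ k ∈ range (i+1), (i.choose k : ℂ) * hatSeq α k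
      = ∑ m ∈ range (i+1), (i.choose k : ℂ) * ((-1:ℂ)^(k+m) * (k.choose m : ℂ) * α m) := by
    intro k hk
    rw [hatSeq, Finset.mul_sum]
    apply Finset.sum_subset
    · exact Finset.range_subset_range.2 (Nat.succ_le_succ (Nat.lt_succ_iff.mp (Finset.mem_range.mp hk)))
    · intro m _ hm
      have : k < m := by simpa [Nat.lt_succ_iff] using hm
      simp [Nat.choose_eq_zero_of_lt this]
  rw [Finset.sum_congr rfl expand, Finset.sum_comm]
  have inner : ∀ m ∈ range (i+1),
      ∑ k ∈ range (i+1), (i.choose k : ℂ) * ((-1:ℂ)^(k+m) * (k.choose m : ℂ) * α m)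
        = (if m = i then α i else 0) := by
    intro m hm
    have hmi : m ≤ i := Nat.lt_succ_iff.mp (Finset.mem_range.mp hm)
    have h1 : ∑ k ∈ range (i+1), (i.choose k : ℂ) * ((-1:ℂ)^(k+m) * (k.choose m : ℂ) * α m)
        = ∑ k ∈ Finset.Ico m (i+1), (i.choose k : ℂ) * ((-1:ℂ)^(k+m) * (k.choose m : ℂ) * α m) := by
      symm
      apply Finset.sum_subset
      · intro k hk; exact Finset.mem_range.2 (Finset.mem_Ico.mp hk).2
      · intro k _ hk
        rw [Finset.mem_range] at *
        have : k < m := by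
          by_contra hc
          exact hk (Finset.mem_Ico.2 ⟨Nat.le_of_not_lt hc, by omega⟩)
        simp [Nat.choose_eq_zero_of_lt this]
    rw [h1, Finset.sum_Ico_eq_sum_range]
    have h2 : ∀ d ∈ range (i+1-m), (i.choose (m+d) : ℂ) * ((-1:ℂ)^((m+d)+m) * ((m+d).choose m : ℂ) * α m)
        = (i.choose m : ℂ) * (((-1:ℂ)^d * ((i-m).choose d : ℂ)) * α m) := by
      intro d hd
      have hd' : m + d ≤ i := by
        have := Finset.mem_range.mp hd; omega
      have hc := Nat.choose_mul (n := i) (Nat.le_add_right m d)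
      have hcc : (i.choose (m+d) : ℂ) * ((m+d).choose m : ℂ) = (i.choose m : ℂ) * ((i-m).choose d : ℂ) := by
        have : (m + d) - m = d := by omega
        rw [this] at hc
        exact_mod_cast congrArg (Nat.cast : ℕ → ℂ) hc
      have hsign : (-1:ℂ)^((m+d)+m) = (-1:ℂ)^d := by
        rw [show (m+d)+m = 2*m + d by ring, pow_add, pow_mul]
        simp
      rw [hsign]
      calc (i.choose (m+d) : ℂ) * ((-1:ℂ)^d * ((m+d).choose m : ℂ) * α m)
          = ((i.choose (m+d) : ℂ) * ((m+d).choose m : ℂ)) * ((-1:ℂ)^d * α m) := by ring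
        _ = ((i.choose m : ℂ) * ((i-m).choose d : ℂ)) * ((-1:ℂ)^d * α m) := by rw [hcc]
        _ = _ := by ring
    rw [Finset.sum_congr rfl h2, ← Finset.mul_sum]
    have hrange : i + 1 - m = (i - m) + 1 := by omega
    have halt : ∑ d ∈ range ((i-m)+1), ((-1:ℂ)^d * ((i-m).choose d : ℂ)) * α m
        = (if i - m = 0 then 1 else 0) * α m := by
      rw [← Finset.sum_mul]
      congr 1
      have h := Int.alternating_sum_range_choose (n := i - m)
      have h' := congrArg (fun z : ℤ => (z : ℂ)) h
      push_cast at h'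
      convert h' using 2
    rw [hrange, halt]
    by_cases hmi' : m = i
    · subst hmi'; simp
    · have : i - m ≠ 0 := by omega
      simp [this, hmi']
  rw [Finset.sum_congr rfl inner]
  simp

/-- Entry of the Töplitz matrix as a function on ℕ. -/
def tEnt (α β : ℕ → ℂ) (k l : ℕ) : ℂ :=
  if l ≤ k then hatSeq α (k - l) else hatSeq β (l - k)

lemma tEnt_shift (α β : ℕ → ℂ) (k l : ℕ) : tEnt α β (k+1) (l+1) = tEnt α β k l := by
  simp [tEnt, Nat.succ_sub_succ, Nat.add_le_add_iff_right]

noncomputable def Q (α β : ℕ → ℂ) (i j : ℕ) : ℂ :=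
  ∑ k ∈ range (i+1), ∑ l ∈ range (j+1), (i.choose k : ℂ) * (j.choose l : ℂ) * tEnt α β k l

noncomputable def Rk (α β : ℕ → ℂ) (i j : ℕ) : ℂ :=
  ∑ k ∈ range (i+1), ∑ l ∈ range (j+1), (i.choose k : ℂ) * (j.choose l : ℂ) * tEnt α β (k+1) l

lemma Q_left (α β : ℕ → ℂ) (i j : ℕ) : Q α β (i+1) j = Q α β i j + Rk α β i j := by
  have := step (fun k => ∑ l ∈ range (j+1), (j.choose l : ℂ) * tEnt α β k l) i
  simpa [Q, Rk, Finset.mul_sum, mul_assoc] using this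

lemma Q_rec (α β : ℕ → ℂ) (i j : ℕ) :
    Q α β (i+1) (j+1) = Q α β i (j+1) + Q α β (i+1) j := by
  have hA : Rk α β i (j+1)
      = (∑ k ∈ range (i+1), ∑ l ∈ range (j+1), (i.choose k : ℂ) * (j.choose l : ℂ) * tEnt α β (k+1) l)
        + ∑ k ∈ range (i+1), ∑ l ∈ range (j+1), (i.choose k : ℂ) * (j.choose l : ℂ) * tEnt α β (k+1) (l+1) := by
    unfold Rk
    rw [← Finset.sum_add_distrib]
    apply Finset.sum_congr rfl
    intro k _
    have := step (fun l => tEnt α β (k+1) l) j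
    calc ∑ l ∈ range (j+2), (i.choose k : ℂ) * ((j+1).choose l : ℂ) * tEnt α β (k+1) l
        = (i.choose k : ℂ) * ∑ l ∈ range (j+2), ((j+1).choose l : ℂ) * tEnt α β (k+1) l := by
          rw [Finset.mul_sum]; apply Finset.sum_congr rfl; intro l _; ring
      _ = (i.choose k : ℂ) * ((∑ l ∈ range (j+1), (j.choose l : ℂ) * tEnt α β (k+1) l)
            + ∑ l ∈ range (j+1), (j.choose l : ℂ) * tEnt α β (k+1) (l+1)) := by rw [this]
      _ = _ := by
          rw [mul_add, Finset.mul_sum, Finset.mul_sum]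
          congr 1 <;> (apply Finset.sum_congr rfl; intro l _; ring)
  have h2 : ∑ k ∈ range (i+1), ∑ l ∈ range (j+1), (i.choose k : ℂ) * (j.choose l : ℂ) * tEnt α β (k+1) (l+1)
      = Q α β i j := by
    unfold Q
    apply Finset.sum_congr rfl; intro k _; apply Finset.sum_congr rfl; intro l _
    rw [tEnt_shift]
  have hB := Q_left α β i j
  have hC := Q_left α β i (j+1)
  rw [hA, h2] at hC
  have hD : (∑ k ∈ range (i+1), ∑ l ∈ range (j+1), (i.choose k : ℂ) * (j.choose l : ℂ) * tEnt α β (k+1) l) = Rk α β i j := rfl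
  rw [hC, hD, hB]
  ring

lemma hatSeq_zero (α : ℕ → ℂ) : hatSeq α 0 = α 0 := by simp [hatSeq]

lemma Q_eq (α β : ℕ → ℂ) (h : α 0 = β 0) : ∀ i j, Q α β i j = pascalEntry α β i j
  | i, 0 => by
    have : Q α β i 0 = ∑ k ∈ range (i+1), (i.choose k : ℂ) * hatSeq α k := by
      unfold Q
      apply Finset.sum_congr rfl; intro k _
      simp [tEnt]
    rw [this, inv_lemma, pascalEntry]
  | 0, j+1 => by
    have : Q α β 0 (j+1) = ∑ l ∈ range (j+2), ((j+1).choose l : ℂ) * hatSeq β l := by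
      unfold Q
      rw [Finset.sum_range_one]
      apply Finset.sum_congr rfl; intro l _
      rcases Nat.eq_zero_or_pos l with hl | hl
      · subst hl; simp [tEnt, hatSeq_zero, h]
      · have : ¬ (l ≤ 0) := by omega
        simp [tEnt, this]
    rw [this, inv_lemma, pascalEntry]
  | i+1, j+1 => by
    rw [pascalEntry, ← Q_eq α β h i (j+1), ← Q_eq α β h (i+1) j, Q_rec]

lemma sum_trunc (n m : ℕ) (hm : m < n) (x : ℕ → ℂ) :
    ∑ k ∈ range n, (if k ≤ m then (m.choose k : ℂ) else 0) * x k
      = ∑ k ∈ range (m+1), (m.choose k : ℂ) * x k := by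
  rw [← Finset.sum_subset (Finset.range_subset_range.2 (by omega) : range (m+1) ⊆ range n)]
  · apply Finset.sum_congr rfl
    intro k hk
    rw [if_pos (Nat.lt_succ_iff.mp (Finset.mem_range.mp hk))]
  · intro k _ hk
    have : ¬ (k ≤ m) := by
      have := Finset.mem_range.not.mp hk; omega
    rw [if_neg this, zero_mul]

end BacherAux

/-- `det(P_{α,β}(n)) = det(T_{α̂,β̂}(n))`. -/
theorem det_genPascal_eq_det_toeplitz (α β : ℕ → ℂ) (h : α 0 = β 0) (n : ℕ) (hn : 0 < n) :
    (genPascal α β n).det = (toeplitz (hatSeq α) (hatSeq β) n).det := by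
  open BacherAux Finset in
  have factor : genPascal α β n
      = lowerL ℂ n * toeplitz (hatSeq α) (hatSeq β) n * (lowerL ℂ n)ᵀ := by
    ext i j
    have e1 : (lowerL ℂ n * toeplitz (hatSeq α) (hatSeq β) n * (lowerL ℂ n)ᵀ) i j
        = ∑ l : Fin n, (∑ k : Fin n, lowerL ℂ n i k * toeplitz (hatSeq α) (hatSeq β) n k l)
            * lowerL ℂ n j l := by
      simp [Matrix.mul_apply, Matrix.transpose_apply]
    have e2 : ∀ l : Fin n,
        (∑ k : Fin n, lowerL ℂ n i k * toeplitz (hatSeq α) (hatSeq β) n k l)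
          = ∑ k ∈ range ((i:ℕ)+1), ((i:ℕ).choose k : ℂ) * tEnt α β k (l:ℕ) := by
      intro l
      have e := Fin.sum_univ_eq_sum_range
        (fun k => (if k ≤ (i:ℕ) then ((i:ℕ).choose k : ℂ) else 0) * tEnt α β k (l:ℕ)) n
      calc (∑ k : Fin n, lowerL ℂ n i k * toeplitz (hatSeq α) (hatSeq β) n k l)
          = ∑ k ∈ range n, (if k ≤ (i:ℕ) then ((i:ℕ).choose k : ℂ) else 0) * tEnt α β k (l:ℕ) := e
        _ = _ := sum_trunc n i i.isLt _
    rw [e1, Finset.sum_congr rfl (fun l _ => by rw [e2 l])]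
    have e3 := Fin.sum_univ_eq_sum_range
      (fun l => (∑ k ∈ range ((i:ℕ)+1), ((i:ℕ).choose k : ℂ) * tEnt α β k l)
        * (if l ≤ (j:ℕ) then ((j:ℕ).choose l : ℂ) else 0)) n
    rw [show (∑ l : Fin n, (∑ k ∈ range ((i:ℕ)+1), ((i:ℕ).choose k : ℂ) * tEnt α β k (l:ℕ))
          * lowerL ℂ n j l)
        = ∑ l ∈ range n, (∑ k ∈ range ((i:ℕ)+1), ((i:ℕ).choose k : ℂ) * tEnt α β k l)
          * (if l ≤ (j:ℕ) then ((j:ℕ).choose l : ℂ) else 0) from e3]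
    have e4 : ∑ l ∈ range n, (∑ k ∈ range ((i:ℕ)+1), ((i:ℕ).choose k : ℂ) * tEnt α β k l)
          * (if l ≤ (j:ℕ) then ((j:ℕ).choose l : ℂ) else 0)
        = ∑ l ∈ range ((j:ℕ)+1), ((j:ℕ).choose l : ℂ)
            * ∑ k ∈ range ((i:ℕ)+1), ((i:ℕ).choose k : ℂ) * tEnt α β k l := by
      rw [← sum_trunc n j j.isLt (fun l => ∑ k ∈ range ((i:ℕ)+1), ((i:ℕ).choose k : ℂ) * tEnt α β k l)]
      apply Finset.sum_congr rfl
      intro l _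
      ring
    rw [e4]
    have e5 : ∑ l ∈ range ((j:ℕ)+1), ((j:ℕ).choose l : ℂ)
            * ∑ k ∈ range ((i:ℕ)+1), ((i:ℕ).choose k : ℂ) * tEnt α β k l
        = Q α β (i:ℕ) (j:ℕ) := by
      unfold Q
      rw [Finset.sum_comm]
      apply Finset.sum_congr rfl
      intro l _
      rw [Finset.mul_sum]
      apply Finset.sum_congr rfl
      intro k _
      ring
    rw [e5, Q_eq α β h]
    rfl
  have hLtri : (lowerL ℂ n).BlockTriangular OrderDual.toDual := by
    intro a b hab
    have hlt : (a:ℕ) < (b:ℕ) := hab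
    have : ¬ ((b:ℕ) ≤ (a:ℕ)) := by omega
    simp only [lowerL, Matrix.of_apply, if_neg this]
  have hLdet : (lowerL ℂ n).det = 1 := by
    rw [Matrix.det_of_lowerTriangular _ hLtri]
    simp [lowerL]
  rw [factor, Matrix.det_mul, Matrix.det_mul, Matrix.det_transpose, hLdet]
  ring
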